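/- Let (f_n(q))_{n≥0} be a sequence of Laurent polynomials with integer coefficients such that the sequence ((q)_n·f_n(q))_{n≥0} is nicely bounded, where (q)_n = ∏_{j=1}^n (1 − q^j). Then the sequence (f_n(q))_{n≥0} is itself nicely bounded. -/

import Mathlib

/-- A sequence of integer Laurent polynomials is *nicely bounded* if the support of
`f n` lies in `[−C'·n², C'·n²]` and the ℓ¹-norm of `f n` is at most `C^n`, for all `n ≥ 1`. -/
def NicelyBounded (f : ℕ → LaurentPolynomial ℤ) : Prop :=
  ∃ C C' : ℝ, 0 < C ∧ 0 < C' ∧ ∀ n : ℕ, 1 ≤ n →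
    (∀ j ∈ (f n).coeff.support, |(j : ℝ)| ≤ C' * (n : ℝ) ^ 2) ∧
    (∑ j ∈ (f n).coeff.support, |((f n).coeff j : ℝ)|) ≤ C ^ n

/-- The Laurent polynomial `(q)_k = ∏_{j=1}^k (1 − q^j)`. -/
noncomputable def qPochhammer' (k : ℕ) : LaurentPolynomial ℤ :=
  ∏ j ∈ Finset.range k, (1 - LaurentPolynomial.T (j + 1))

namespace BoydAux

open LaurentPolynomial Finset

theorem mul_apply_max (p q : LaurentPolynomial ℤ) (A B : ℤ) (hA : ∀ a ∈ p.coeff.support, a ≤ A)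
    (hB : ∀ b ∈ q.coeff.support, b ≤ B) : (p * q).coeff (A + B) = p.coeff A * q.coeff B := by
  classical
  rw [AddMonoidAlgebra.coeff_mul, Finsupp.sum, Finset.sum_eq_single A]
  · rw [Finsupp.sum, Finset.sum_eq_single B]
    · simp
    · intro b hb hbB
      exact if_neg (by omega)
    · intro hB'
      rw [Finsupp.notMem_support_iff.mp hB', mul_zero, if_pos rfl]
  · intro a ha haA
    apply Finset.sum_eq_zero
    intro b hb
    have h1 := hA a ha; have h2 := hB b hb
    exact if_neg (by omega)
  · intro hA'
    rw [Finsupp.notMem_support_iff.mp hA']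
    apply Finset.sum_eq_zero; intro b hb; simp

theorem mul_apply_min (p q : LaurentPolynomial ℤ) (A B : ℤ) (hA : ∀ a ∈ p.coeff.support, A ≤ a)
    (hB : ∀ b ∈ q.coeff.support, B ≤ b) : (p * q).coeff (A + B) = p.coeff A * q.coeff B := by
  classical
  rw [AddMonoidAlgebra.coeff_mul, Finsupp.sum, Finset.sum_eq_single A]
  · rw [Finsupp.sum, Finset.sum_eq_single B]
    · simp
    · intro b hb hbB
      exact if_neg (by omega)
    · intro hB'
      rw [Finsupp.notMem_support_iff.mp hB', mul_zero, if_pos rfl]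
  · intro a ha haA
    apply Finset.sum_eq_zero
    intro b hb
    have h1 := hA a ha; have h2 := hB b hb
    exact if_neg (by omega)
  · intro hA'
    rw [Finsupp.notMem_support_iff.mp hA']
    apply Finset.sum_eq_zero; intro b hb; simp

theorem support_one_sub_T (a : ℤ) : (1 - T a : LaurentPolynomial ℤ).coeff.support ⊆ {0, a} := by
  classical
  intro k hk
  have h1 : (1 : LaurentPolynomial ℤ).coeff = Finsupp.single 0 1 := rfl
  have h2 : (T a : LaurentPolynomial ℤ).coeff = Finsupp.single a 1 := rfl
  have := Finsupp.mem_support_iff.mp hk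
  rw [AddMonoidAlgebra.coeff_sub, Finsupp.sub_apply, h1, h2, Finsupp.single_apply, Finsupp.single_apply] at this
  simp only [Finset.mem_insert, Finset.mem_singleton]
  by_contra hc
  push_neg at hc
  rw [if_neg (by omega), if_neg (by omega)] at this
  simp at this

theorem one_sub_T_apply_zero (a : ℤ) (ha : a ≠ 0) : (1 - T a : LaurentPolynomial ℤ).coeff 0 = 1 := by
  classical
  have h1 : (1 : LaurentPolynomial ℤ).coeff = Finsupp.single 0 1 := rfl
  have h2 : (T a : LaurentPolynomial ℤ).coeff = Finsupp.single a 1 := rfl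
  rw [AddMonoidAlgebra.coeff_sub, Finsupp.sub_apply, h1, h2, Finsupp.single_apply, Finsupp.single_apply,
    if_pos rfl, if_neg ha]
  ring

theorem support_mul_lb (p q : LaurentPolynomial ℤ) (c d : ℤ)
    (hp : ∀ k ∈ p.coeff.support, c ≤ k) (hq : ∀ k ∈ q.coeff.support, d ≤ k) :
    ∀ k ∈ (p * q).coeff.support, c + d ≤ k := by
  classical
  intro k hk
  have := AddMonoidAlgebra.support_coeff_mul_subset p q hk
  rw [Finset.mem_add] at this
  obtain ⟨a, ha, b, hb, rfl⟩ := this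
  exact add_le_add (hp a ha) (hq b hb)

theorem qPochhammer'_support_nonneg (n : ℕ) :
    ∀ k ∈ (qPochhammer' n).coeff.support, 0 ≤ k := by
  induction n with
  | zero =>
    intro k hk
    simp only [qPochhammer', Finset.range_zero, Finset.prod_empty, AddMonoidAlgebra.one_def,
      AddMonoidAlgebra.coeff_single, Finsupp.mem_support_single] at hk
    omega
  | succ m ih =>
    rw [qPochhammer', Finset.prod_range_succ, ← qPochhammer']
    intro k hk
    have := support_mul_lb (qPochhammer' m) (1 - T (m + 1)) 0 0 ih
      (fun k hk => by
        have := support_one_sub_T (m + 1 : ℤ) hk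
        simp only [Finset.mem_insert, Finset.mem_singleton] at this
        rcases this with h | h <;> omega) k hk
    omega

theorem qPochhammer'_apply_zero (n : ℕ) : (qPochhammer' n).coeff 0 = 1 := by
  induction n with
  | zero =>
    rw [qPochhammer']
    simp only [Finset.range_zero, Finset.prod_empty]
    rw [show (1 : LaurentPolynomial ℤ).coeff = Finsupp.single 0 1 from rfl, Finsupp.single_apply]
    simp
  | succ m ih =>
    rw [qPochhammer', Finset.prod_range_succ, ← qPochhammer']
    have := mul_apply_min (qPochhammer' m) (1 - T (m + 1)) 0 0
      (qPochhammer'_support_nonneg m)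
      (fun k hk => by
        have := support_one_sub_T (m + 1 : ℤ) hk
        simp only [Finset.mem_insert, Finset.mem_singleton] at this
        rcases this with h | h <;> omega)
    simp only [add_zero] at this
    rw [this, ih, one_sub_T_apply_zero _ (by omega)]
    ring

theorem laurent_telescope (a : ℤ) (K : ℕ) :
    (1 - T a : LaurentPolynomial ℤ) * ∑ m ∈ range K, T (a * m) = 1 - T (a * K) := by
  rw [sub_mul, one_mul, Finset.mul_sum]
  have h1 : ∀ m : ℕ, (T a : LaurentPolynomial ℤ) * T (a * m) = T (a * ((m : ℤ) + 1)) := by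
    intro m
    rw [← T_add]; ring_nf
  simp_rw [h1]
  have h2 : ∀ m : ℕ, (a * ((m : ℤ) + 1)) = a * ((m + 1 : ℕ) : ℤ) := by intro m; push_cast; ring
  simp_rw [h2]
  rw [← Finset.sum_sub_distrib, Finset.sum_range_sub' (fun m => (T (a * m) : LaurentPolynomial ℤ))]
  simp [T_zero]

theorem sub_one_support_ge (n M : ℕ) :
    ∀ k ∈ ((∏ j ∈ range n, (1 - T (((j:ℤ) + 1) * (M + 1)) : LaurentPolynomial ℤ)) - 1).coeff.support,
      ((M:ℤ) + 1) ≤ k := by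
  induction n with
  | zero => simp
  | succ m ih =>
    rw [Finset.prod_range_succ]
    set QQ := ∏ j ∈ range m, (1 - T (((j:ℤ) + 1) * (M + 1)) : LaurentPolynomial ℤ) with hQQ
    have hid : QQ * (1 - T (((m:ℤ) + 1) * (M + 1))) - 1
        = (QQ - 1) * (1 - T (((m:ℤ) + 1) * (M + 1))) - T (((m:ℤ) + 1) * (M + 1)) := by ring
    rw [hid]
    intro k hk
    rw [AddMonoidAlgebra.coeff_sub] at hk
    have hsub := Finsupp.support_sub hk
    rw [Finset.mem_union] at hsub
    rcases hsub with h | h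
    · have := support_mul_lb (QQ - 1) (1 - T (((m:ℤ) + 1) * (M + 1))) ((M:ℤ)+1) 0 ih
        (fun k hk => by
          have := support_one_sub_T (((m:ℤ) + 1) * (M + 1)) hk
          simp only [Finset.mem_insert, Finset.mem_singleton] at this
          rcases this with h | h
          · omega
          · subst h; positivity) k h
      omega
    · have hT : (T (((m:ℤ) + 1) * (M + 1)) : LaurentPolynomial ℤ).coeff
          = Finsupp.single (((m:ℤ) + 1) * (M + 1)) 1 := rfl
      rw [hT] at h
      have := Finsupp.support_single_subset h
      simp only [Finset.mem_singleton] at this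
      subst this
      nlinarith [Int.natCast_nonneg m, Int.natCast_nonneg M]

noncomputable def evx (x : ℝˣ) : LaurentPolynomial ℤ →ₐ[ℤ] ℝ :=
  AddMonoidAlgebra.lift ℤ ℝ ℤ ((Units.coeHom ℝ).comp (zpowersHom ℝˣ x))

theorem evx_apply (x : ℝˣ) (p : LaurentPolynomial ℤ) :
    evx x p = ∑ k ∈ p.coeff.support, (p.coeff k : ℝ) * (x : ℝ) ^ k := by
  rw [evx, AddMonoidAlgebra.lift_apply, Finsupp.sum]
  exact Finset.sum_congr rfl fun k hk => by
    simp [zsmul_eq_mul, Units.val_zpow_eq_zpow_val]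

theorem evx_T (x : ℝˣ) (a : ℤ) : evx x (T a) = (x : ℝ) ^ a := by
  rw [T, evx, AddMonoidAlgebra.lift_single]
  simp [Units.val_zpow_eq_zpow_val]

def GoodP (p : LaurentPolynomial ℤ) : Prop :=
  (∀ k, 0 ≤ p.coeff k) ∧ ∀ k ∈ p.coeff.support, 0 ≤ k

theorem goodP_one : GoodP 1 := by
  constructor
  · intro k
    have h1 : (1 : LaurentPolynomial ℤ).coeff = Finsupp.single 0 1 := rfl
    rw [h1, Finsupp.single_apply]
    split <;> norm_num
  · intro k hk
    have h1 : (1 : LaurentPolynomial ℤ).coeff = Finsupp.single 0 1 := rfl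
    rw [h1] at hk
    have := Finsupp.support_single_subset hk
    simp at this
    omega

theorem goodP_mul {p q : LaurentPolynomial ℤ} (hp : GoodP p) (hq : GoodP q) : GoodP (p * q) := by
  classical
  constructor
  · intro k
    rw [AddMonoidAlgebra.coeff_mul]
    rw [Finsupp.sum]
    apply Finset.sum_nonneg
    intro a ha
    rw [Finsupp.sum]
    apply Finset.sum_nonneg
    intro b hb
    split
    · exact mul_nonneg (hp.1 a) (hq.1 b)
    · exact le_refl 0
  · intro k hk
    have := AddMonoidAlgebra.support_coeff_mul_subset p q hk
    rw [Finset.mem_add] at this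
    obtain ⟨a, ha, b, hb, rfl⟩ := this
    exact add_nonneg (hp.2 a ha) (hq.2 b hb)

theorem goodP_prod {s : Finset ℕ} {F : ℕ → LaurentPolynomial ℤ}
    (h : ∀ j ∈ s, GoodP (F j)) : GoodP (∏ j ∈ s, F j) := by
  classical
  induction s using Finset.induction_on with
  | empty => simpa using goodP_one
  | @insert a s' hj ih =>
    rw [Finset.prod_insert hj]
    exact goodP_mul (h a (Finset.mem_insert_self a s'))
      (ih fun j hjs => h j (Finset.mem_insert_of_mem hjs))

theorem goodP_geom (a : ℤ) (ha : 0 ≤ a) (K : ℕ) :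
    GoodP (∑ m ∈ range K, (T (a * m) : LaurentPolynomial ℤ)) := by
  classical
  constructor
  · intro k
    rw [AddMonoidAlgebra.coeff_sum, Finset.sum_apply']
    apply Finset.sum_nonneg
    intro m hm
    rw [T_apply]
    split <;> norm_num
  · intro k hk
    rw [AddMonoidAlgebra.coeff_sum] at hk
    have := Finsupp.support_finset_sum (s := range K)
      (f := fun m => (T (a * m) : LaurentPolynomial ℤ).coeff) hk
    rw [Finset.mem_biUnion] at this
    obtain ⟨m, hm, hkm⟩ := this
    have := Finsupp.support_single_subset (by exact hkm)
    simp only [Finset.mem_singleton] at this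
    subst this
    positivity

theorem coeff_le_evx (x : ℝˣ) (hx : (0:ℝ) < x) {p : LaurentPolynomial ℤ} (hp : GoodP p) (b : ℤ) :
    (p.coeff b : ℝ) * (x:ℝ) ^ b ≤ evx x p := by
  rw [evx_apply]
  by_cases hb : b ∈ p.coeff.support
  · apply Finset.single_le_sum (f := fun k => ((p.coeff k : ℝ) * (x:ℝ) ^ k)) _ hb
    intro k hk
    have h1 : (0:ℝ) ≤ (p.coeff k : ℝ) := by exact_mod_cast hp.1 k
    have h2 : (0:ℝ) < (x:ℝ) ^ k := zpow_pos hx k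
    positivity
  · rw [Finsupp.notMem_support_iff.mp hb]
    push_cast
    rw [zero_mul]
    apply Finset.sum_nonneg
    intro k hk
    have h1 : (0:ℝ) ≤ (p.coeff k : ℝ) := by exact_mod_cast hp.1 k
    have h2 : (0:ℝ) < (x:ℝ) ^ k := zpow_pos hx k
    positivity

theorem exp_line (t : ℝ) (h0 : 0 ≤ t) (h1 : t ≤ 1) :
    (1 - Real.exp (-1)) * t ≤ 1 - Real.exp (-t) := by
  have := convexOn_exp.2 (Set.mem_univ (0:ℝ)) (Set.mem_univ (-1:ℝ))
    (by linarith : (0:ℝ) ≤ 1 - t) (by linarith : (0:ℝ) ≤ t) (by ring)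
  simp only [smul_eq_mul, mul_zero, zero_add, Real.exp_zero] at this
  have h2 : t * (-1) = -t := by ring
  rw [h2] at this
  nlinarith

theorem pow_self_le_factorial_mul_exp (n : ℕ) :
    (n : ℝ) ^ n ≤ (n.factorial : ℝ) * Real.exp n := by
  have h := Real.sum_le_exp_of_nonneg (x := (n:ℝ)) (by positivity) (n + 1)
  have h2 : (n:ℝ)^n / n.factorial ≤ ∑ i ∈ range (n+1), (n:ℝ)^i / i.factorial := by
    have := Finset.single_le_sum (f := fun i => (n:ℝ)^i / i.factorial)
      (fun i _ => by positivity) (Finset.self_mem_range_succ n)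
    exact this
  have h3 : (n:ℝ)^n / n.factorial ≤ Real.exp n := le_trans h2 h
  have hf : (0:ℝ) < n.factorial := by positivity
  calc (n:ℝ)^n = ((n:ℝ)^n / n.factorial) * n.factorial := by field_simp
    _ ≤ Real.exp n * n.factorial := mul_le_mul_of_nonneg_right h3 hf.le
    _ = (n.factorial : ℝ) * Real.exp n := by ring

theorem geom_sum_le_inv (r : ℝ) (h0 : 0 ≤ r) (h1 : r < 1) (K : ℕ) :
    ∑ m ∈ range K, r ^ m ≤ (1 - r)⁻¹ := by
  have hne : (0:ℝ) < 1 - r := by linarith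
  rw [geom_sum_eq (by linarith : r ≠ 1)]
  rw [div_le_iff_of_neg (by linarith : r - 1 < 0)]
  have hrK : 0 ≤ r ^ K := by positivity
  have : (1-r)⁻¹ * (1-r) = 1 := inv_mul_cancel₀ (by linarith)
  nlinarith

theorem prod_one_sub_exp_ge (n : ℕ) (hn : 1 ≤ n) :
    ((1 - Real.exp (-1)) / Real.exp 1) ^ n ≤
      ∏ j ∈ range n, (1 - Real.exp (-(((j:ℝ) + 1) / n))) := by
  have he : 0 < 1 - Real.exp (-1) := by
    have : Real.exp (-1) < 1 := by rw [Real.exp_lt_one_iff]; norm_num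
    linarith
  have hn0 : (0:ℝ) < n := by exact_mod_cast hn
  have step : ∀ j ∈ range n,
      (1 - Real.exp (-1)) * (((j:ℝ)+1)/n) ≤ 1 - Real.exp (-(((j:ℝ) + 1) / n)) := by
    intro j hj
    apply exp_line
    · positivity
    · rw [div_le_one hn0]
      have : (j:ℝ) + 1 ≤ n := by
        have := Finset.mem_range.mp hj
        exact_mod_cast this
      linarith
  have hmid : (Real.exp 1)⁻¹ ^ n ≤ (n.factorial : ℝ) / (n:ℝ)^n := by
    have hexp : Real.exp 1 ^ n = Real.exp n := by
      rw [← Real.exp_nat_mul]; norm_num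
    have hnn : (0:ℝ) < (n:ℝ)^n := by positivity
    rw [inv_pow, hexp, le_div_iff₀ hnn]
    have h1 : (0:ℝ) < Real.exp (n:ℝ) := Real.exp_pos _
    have hid : (Real.exp (n:ℝ))⁻¹ * Real.exp (n:ℝ) = 1 := inv_mul_cancel₀ h1.ne'
    have hfact := pow_self_le_factorial_mul_exp n
    have hinv : (0:ℝ) ≤ (Real.exp (n:ℝ))⁻¹ := by positivity
    nlinarith
  calc ((1 - Real.exp (-1)) / Real.exp 1) ^ n
      = (1 - Real.exp (-1))^n * (Real.exp 1)⁻¹ ^ n := by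
        rw [div_pow, inv_pow, div_eq_mul_inv]
    _ ≤ (1 - Real.exp (-1))^n * ((n.factorial : ℝ) / (n:ℝ)^n) := by
        apply mul_le_mul_of_nonneg_left hmid (by positivity)
    _ = ∏ j ∈ range n, ((1 - Real.exp (-1)) * (((j:ℝ)+1)/n)) := by
        rw [Finset.prod_mul_distrib, Finset.prod_const, Finset.card_range]
        congr 1
        rw [Finset.prod_div_distrib, Finset.prod_const, Finset.card_range]
        congr 1
        rw [← Finset.prod_range_add_one_eq_factorial n, Nat.cast_prod]
        push_cast
        rfl
    _ ≤ ∏ j ∈ range n, (1 - Real.exp (-(((j:ℝ) + 1) / n))) := by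
        apply Finset.prod_le_prod
        · intro j hj; positivity
        · exact step

end BoydAux

open BoydAux LaurentPolynomial Finset

/-- (Boyd) If `((q)_n·f_n(q))` is nicely bounded, then `(f_n(q))` is nicely bounded. -/
theorem nicelyBounded_of_qPochhammer_mul (f : ℕ → LaurentPolynomial ℤ)
    (h : NicelyBounded (fun n => qPochhammer' n * f n)) :
    NicelyBounded f := by
  classical
  obtain ⟨C, C', hC, hC', hg⟩ := h
  have hexp1 : Real.exp (-1) < 1 := by rw [Real.exp_lt_one_iff]; norm_num
  have he : (0:ℝ) < 1 - Real.exp (-1) := by linarith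
  obtain ⟨K0, hK0⟩ : ∃ K0 : ℝ, K0 = Real.exp 1 / (1 - Real.exp (-1)) := ⟨_, rfl⟩
  have hK0pos : 0 < K0 := by rw [hK0]; positivity
  obtain ⟨Cout, hCout⟩ : ∃ Cout : ℝ, Cout = (2*C'+3) * 4 * C * Real.exp (2*(C'+1)) * K0 :=
    ⟨_, rfl⟩
  have hCoutpos : 0 < Cout := by
    rw [hCout]
    have : 0 < Real.exp (2*(C'+1)) := Real.exp_pos _
    positivity
  refine ⟨Cout, C', hCoutpos, hC', ?_⟩
  intro n hn
  obtain ⟨hgs, hgsum⟩ := hg n hn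
  simp only at hgs hgsum
  set g : LaurentPolynomial ℤ := qPochhammer' n * f n with hgdef
  clear_value g
  by_cases hf0 : f n = 0
  · constructor
    · intro j hj; rw [hf0] at hj; simp at hj
    · rw [hf0]
      simp only [AddMonoidAlgebra.coeff_zero, Finsupp.support_zero, Finset.sum_empty]
      exact (pow_pos hCoutpos n).le
  -- main case
  have hn0R : (0:ℝ) < n := by exact_mod_cast hn
  have hn1R : (1:ℝ) ≤ (n:ℝ) := by exact_mod_cast hn
  have hfsupp : (f n).coeff.support.Nonempty := Finsupp.support_nonempty_iff.mpr
      (fun h => hf0 (AddMonoidAlgebra.ext (by rw [h]; rfl)))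
  obtain ⟨sup, hsupmem, hsupmax⟩ :
      ∃ s, s ∈ (f n).coeff.support ∧ ∀ a ∈ (f n).coeff.support, a ≤ s :=
    ⟨(f n).coeff.support.max' hfsupp, Finset.max'_mem _ _, fun a ha => Finset.le_max' _ a ha⟩
  obtain ⟨inf, hinfmem, hinfmin⟩ :
      ∃ s, s ∈ (f n).coeff.support ∧ ∀ a ∈ (f n).coeff.support, s ≤ a :=
    ⟨(f n).coeff.support.min' hfsupp, Finset.min'_mem _ _, fun a ha => Finset.min'_le _ a ha⟩
  have hq0 := qPochhammer'_apply_zero n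
  have hqs := qPochhammer'_support_nonneg n
  have hq0mem : (0:ℤ) ∈ (qPochhammer' n).coeff.support :=
    Finsupp.mem_support_iff.mpr (by rw [hq0]; norm_num)
  have hqsupp : (qPochhammer' n).coeff.support.Nonempty := ⟨0, hq0mem⟩
  obtain ⟨B, hBmem, hBmax⟩ :
      ∃ s, s ∈ (qPochhammer' n).coeff.support ∧ ∀ a ∈ (qPochhammer' n).coeff.support, a ≤ s :=
    ⟨(qPochhammer' n).coeff.support.max' hqsupp, Finset.max'_mem _ _, fun a ha => Finset.le_max' _ a ha⟩
  have hB0 : (0:ℤ) ≤ B := hBmax 0 hq0mem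
  have htop : g.coeff (B + sup) ≠ 0 := by
    rw [hgdef, mul_apply_max (qPochhammer' n) (f n) B sup hBmax hsupmax]
    exact mul_ne_zero (Finsupp.mem_support_iff.mp hBmem) (Finsupp.mem_support_iff.mp hsupmem)
  have htopmem : B + sup ∈ g.coeff.support := Finsupp.mem_support_iff.mpr htop
  have hsupR : (sup:ℝ) ≤ C' * (n:ℝ)^2 := by
    have h1 := hgs _ htopmem
    have h2 : ((B + sup : ℤ):ℝ) ≤ C' * (n:ℝ)^2 := le_trans (le_abs_self _) h1
    have h3 : (0:ℝ) ≤ (B:ℝ) := by exact_mod_cast hB0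
    push_cast at h2
    linarith
  have hbotv : g.coeff inf = (f n).coeff inf := by
    have := mul_apply_min (qPochhammer' n) (f n) 0 inf hqs hinfmin
    rw [zero_add] at this
    rw [hgdef, this, hq0, one_mul]
  have hbotmem : inf ∈ g.coeff.support := Finsupp.mem_support_iff.mpr
    (by rw [hbotv]; exact Finsupp.mem_support_iff.mp hinfmem)
  have hinfR : -(C' * (n:ℝ)^2) ≤ (inf:ℝ) := by
    have h1 := hgs _ hbotmem
    exact neg_le_of_abs_le h1
  have hsuppf : ∀ j ∈ (f n).coeff.support, |(j:ℝ)| ≤ C' * (n:ℝ)^2 := by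
    intro j hj
    rw [abs_le]
    constructor
    · have h1 : inf ≤ j := hinfmin j hj
      have h2 : (inf:ℝ) ≤ (j:ℝ) := by exact_mod_cast h1
      linarith
    · have h1 : j ≤ sup := hsupmax j hj
      have h2 : (j:ℝ) ≤ (sup:ℝ) := by exact_mod_cast h1
      linarith
  refine ⟨hsuppf, ?_⟩
  -- ℓ¹ part
  obtain ⟨N, hNlb, hNub0⟩ : ∃ N : ℕ, C' * (n:ℝ)^2 ≤ (N:ℝ) ∧ (N:ℝ) < C' * (n:ℝ)^2 + 1 :=
    ⟨⌈C' * (n:ℝ)^2⌉₊, Nat.le_ceil _, Nat.ceil_lt_add_one (by positivity)⟩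
  have hn2ge1 : (1:ℝ) ≤ (n:ℝ)^2 := by nlinarith
  have hNub : (N:ℝ) ≤ (C'+1) * (n:ℝ)^2 := by nlinarith
  have hgN : ∀ a ∈ g.coeff.support, -(N:ℤ) ≤ a ∧ a ≤ N := by
    intro a ha
    have h1 : |(a:ℝ)| ≤ (N:ℝ) := le_trans (hgs a ha) hNlb
    rw [← Int.cast_abs] at h1
    have h2 : |a| ≤ (N:ℤ) := by exact_mod_cast h1
    exact abs_le.mp h2
  have hfN : ∀ a ∈ (f n).coeff.support, -(N:ℤ) ≤ a ∧ a ≤ N := by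
    intro a ha
    have h1 : |(a:ℝ)| ≤ (N:ℝ) := le_trans (hsuppf a ha) hNlb
    rw [← Int.cast_abs] at h1
    have h2 : |a| ≤ (N:ℤ) := by exact_mod_cast h1
    exact abs_le.mp h2
  have hinfsup : inf ≤ sup := hinfmin sup hsupmem
  obtain ⟨M, hMeq⟩ : ∃ M : ℕ, (M:ℤ) = sup - inf :=
    ⟨(sup - inf).toNat, Int.toNat_of_nonneg (by omega)⟩
  obtain ⟨P, hPdef⟩ : ∃ P : LaurentPolynomial ℤ,
      P = ∏ j ∈ Finset.range n, ∑ m ∈ Finset.range (M+1), T (((j:ℤ)+1) * m) := ⟨_, rfl⟩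
  obtain ⟨QQ, hQQdef⟩ : ∃ QQ : LaurentPolynomial ℤ,
      QQ = ∏ j ∈ Finset.range n, (1 - T (((j:ℤ)+1) * ((M:ℤ)+1))) := ⟨_, rfl⟩
  have hqP : qPochhammer' n * P = QQ := by
    rw [qPochhammer', hPdef, ← Finset.prod_mul_distrib, hQQdef]
    apply Finset.prod_congr rfl
    intro j hj
    have ht := laurent_telescope ((j:ℤ)+1) (M+1)
    have hc1 : (((M+1 : ℕ)) : ℤ) = (M:ℤ)+1 := by push_cast; ring
    rw [hc1] at ht
    rw [← ht]
  have hGoodP : GoodP P := by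
    rw [hPdef]
    exact goodP_prod (fun j _ => goodP_geom ((j:ℤ)+1) (by positivity) (M+1))
  have hcoeff : ∀ d ∈ (f n).coeff.support, (f n).coeff d = (g * P).coeff d := by
    intro d hd
    have h1 : f n * QQ = g * P := by rw [← hqP, hgdef]; ring
    have h2 : f n * QQ = f n + f n * (QQ - 1) := by ring
    have h3 : (f n * (QQ - 1)).coeff d = 0 := by
      by_contra hne
      have hdmem : d ∈ (f n * (QQ-1)).coeff.support := Finsupp.mem_support_iff.mpr hne
      have hQQge : ∀ k ∈ (QQ - 1).coeff.support, ((M:ℤ) + 1) ≤ k := by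
        rw [hQQdef]; exact sub_one_support_ge n M
      have hge := support_mul_lb (f n) (QQ - 1) inf ((M:ℤ)+1) hinfmin hQQge d hdmem
      have hdle : d ≤ sup := hsupmax d hd
      omega
    have h4 : (f n * QQ).coeff d = (f n).coeff d + (f n * (QQ - 1)).coeff d := by
      rw [h2]; rw [AddMonoidAlgebra.coeff_add, Finsupp.add_apply]
    have h5 : (f n * QQ).coeff d = (g * P).coeff d := by rw [h1]
    rw [← h5, h4, h3, add_zero]
  have hx0 : (0:ℝ) < Real.exp (-1 / (n:ℝ)) := Real.exp_pos _
  obtain ⟨xu, hxval⟩ : ∃ xu : ℝˣ, ((xu:ℝ)) = Real.exp (-1 / (n:ℝ)) :=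
    ⟨Units.mk0 _ (ne_of_gt hx0), rfl⟩
  have hxpow : ∀ j : ℕ, Real.exp (-1 / (n:ℝ)) ^ j = Real.exp (-(j:ℝ)/n) := by
    intro j
    rw [← Real.exp_nat_mul]
    congr 1
    field_simp
  obtain ⟨Pi0, hPi0def⟩ : ∃ Pi0 : ℝ,
      Pi0 = ∏ j ∈ Finset.range n, (1 - Real.exp (-(((j:ℝ)+1)/n)))⁻¹ := ⟨_, rfl⟩
  have hfac : ∀ j ∈ Finset.range n, (0:ℝ) < 1 - Real.exp (-(((j:ℝ)+1)/n)) := by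
    intro j _
    have h1 : (0:ℝ) < ((j:ℝ)+1)/n := by positivity
    have h2 : Real.exp (-(((j:ℝ)+1)/n)) < 1 := by
      rw [Real.exp_lt_one_iff]; linarith
    linarith
  have hPi0pos : 0 < Pi0 := by
    rw [hPi0def]
    exact Finset.prod_pos (fun j hj => inv_pos.mpr (hfac j hj))
  have hzp : ∀ (j m : ℕ),
      ((xu:ℝ)) ^ (((j:ℤ)+1) * (m:ℤ)) = (Real.exp (-1 / (n:ℝ)) ^ (j+1)) ^ m := by
    intro j m
    have h1 : (((j:ℤ)+1) * (m:ℤ)) = (((j+1) * m : ℕ) : ℤ) := by push_cast; ring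
    rw [h1, zpow_natCast, hxval, pow_mul]
  have hxj1 : ∀ j : ℕ, Real.exp (-1 / (n:ℝ)) ^ (j+1) = Real.exp (-(((j:ℝ)+1)/n)) := by
    intro j
    rw [hxpow (j+1)]
    congr 1
    push_cast
    ring
  have hevP : evx xu P ≤ Pi0 := by
    rw [hPdef, map_prod, hPi0def]
    apply Finset.prod_le_prod
    · intro j _
      rw [map_sum]
      apply Finset.sum_nonneg
      intro m _
      rw [evx_T, hzp]
      positivity
    · intro j hj
      rw [map_sum]
      have hrw : ∀ m ∈ Finset.range (M+1),
          evx xu (T (((j:ℤ)+1) * (m:ℤ))) = (Real.exp (-1 / (n:ℝ)) ^ (j+1)) ^ m := by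
        intro m _
        rw [evx_T, hzp]
      rw [Finset.sum_congr rfl hrw, hxj1 j]
      apply geom_sum_le_inv
      · positivity
      · have := hfac j hj; linarith
  obtain ⟨Ebound, hEdef⟩ : ∃ E : ℝ, E = Real.exp (2*(C'+1)*n) * Pi0 := ⟨_, rfl⟩
  have hEpos : 0 < Ebound := by
    rw [hEdef]
    exact mul_pos (Real.exp_pos _) hPi0pos
  have hPb : ∀ b : ℤ, 0 ≤ b → b ≤ 2*(N:ℤ) → (P.coeff b : ℝ) ≤ Ebound := by
    intro b hb0 hb2
    have hcev := coeff_le_evx xu (by rw [hxval]; exact hx0) hGoodP b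
    obtain ⟨m, hbm⟩ : ∃ m : ℕ, (m:ℤ) = b := ⟨b.toNat, Int.toNat_of_nonneg hb0⟩
    have hz : ((xu:ℝ)) ^ b = Real.exp (-1 / (n:ℝ)) ^ m := by
      rw [← hbm, zpow_natCast, hxval]
    rw [hz] at hcev
    have hxm : 0 < Real.exp (-1 / (n:ℝ)) ^ m := by positivity
    have h4 : (P.coeff b : ℝ) ≤ (evx xu P) / Real.exp (-1 / (n:ℝ)) ^ m := by
      rw [le_div_iff₀ hxm]; exact hcev
    have h5 : (evx xu P) / Real.exp (-1 / (n:ℝ)) ^ m ≤ Pi0 * Real.exp ((m:ℝ)/n) := by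
      rw [hxpow m, div_eq_mul_inv, ← Real.exp_neg,
        show -(-(m:ℝ)/n) = (m:ℝ)/n by ring]
      exact mul_le_mul_of_nonneg_right hevP (Real.exp_nonneg _)
    have h6 : Real.exp ((m:ℝ)/n) ≤ Real.exp (2*(C'+1)*n) := by
      apply Real.exp_le_exp.mpr
      have hm2 : (m:ℝ) ≤ 2*(N:ℝ) := by exact_mod_cast (by omega : (m:ℤ) ≤ 2*(N:ℤ))
      rw [div_le_iff₀ hn0R]
      calc (m:ℝ) ≤ 2*(N:ℝ) := hm2
        _ ≤ 2*((C'+1)*(n:ℝ)^2) := by linarith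
        _ = (2*(C'+1)*n)*n := by ring
    calc (P.coeff b : ℝ) ≤ Pi0 * Real.exp ((m:ℝ)/n) := le_trans h4 h5
      _ ≤ Pi0 * Real.exp (2*(C'+1)*n) := mul_le_mul_of_nonneg_left h6 hPi0pos.le
      _ = Ebound := by rw [hEdef]; ring
  obtain ⟨G1, hG1def⟩ : ∃ G1 : ℝ, G1 = ∑ a ∈ g.coeff.support, |(g.coeff a : ℝ)| := ⟨_, rfl⟩
  have hG1nonneg : 0 ≤ G1 := by
    rw [hG1def]
    exact Finset.sum_nonneg fun a _ => abs_nonneg _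
  have hkey : ∀ d ∈ (f n).coeff.support, |((f n).coeff d : ℝ)| ≤ G1 * Ebound := by
    intro d hd
    have expand : (((g * P).coeff d : ℤ) : ℝ)
        = ∑ a ∈ g.coeff.support, ∑ b ∈ P.coeff.support, (if a + b = d then (g.coeff a : ℝ) * (P.coeff b : ℝ) else 0) := by
      rw [AddMonoidAlgebra.coeff_mul, Finsupp.sum, Int.cast_sum]
      apply Finset.sum_congr rfl
      intro a _
      rw [Finsupp.sum, Int.cast_sum]
      apply Finset.sum_congr rfl
      intro b _
      split <;> simp
    rw [hcoeff d hd, expand]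
    calc |∑ a ∈ g.coeff.support, ∑ b ∈ P.coeff.support, (if a + b = d then (g.coeff a : ℝ) * (P.coeff b : ℝ) else 0)|
        ≤ ∑ a ∈ g.coeff.support, |∑ b ∈ P.coeff.support, (if a + b = d then (g.coeff a : ℝ) * (P.coeff b : ℝ) else 0)| :=
          Finset.abs_sum_le_sum_abs _ _
      _ ≤ ∑ a ∈ g.coeff.support, |(g.coeff a : ℝ)| * Ebound := by
          apply Finset.sum_le_sum
          intro a ha
          calc |∑ b ∈ P.coeff.support, (if a + b = d then (g.coeff a : ℝ) * (P.coeff b : ℝ) else 0)|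
              ≤ ∑ b ∈ P.coeff.support, |(if a + b = d then (g.coeff a : ℝ) * (P.coeff b : ℝ) else 0)| :=
                Finset.abs_sum_le_sum_abs _ _
            _ ≤ ∑ b ∈ P.coeff.support, (if b = d - a then |(g.coeff a : ℝ)| * Ebound else 0) := by
                apply Finset.sum_le_sum
                intro b hb
                by_cases hab : a + b = d
                · rw [if_pos hab, if_pos (by omega), abs_mul]
                  apply mul_le_mul_of_nonneg_left _ (abs_nonneg _)
                  rw [abs_of_nonneg (by exact_mod_cast hGoodP.1 b : (0:ℝ) ≤ (P.coeff b : ℝ))]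
                  apply hPb b (hGoodP.2 b hb)
                  have h1 := (hgN a ha).1
                  have h2 := (hfN d hd).2
                  omega
                · rw [if_neg hab, if_neg (by omega), abs_zero]
            _ ≤ |(g.coeff a : ℝ)| * Ebound := by
                rw [Finset.sum_ite_eq' P.coeff.support (d - a) (fun _ => |(g.coeff a : ℝ)| * Ebound)]
                split
                · exact le_refl _
                · exact mul_nonneg (abs_nonneg _) hEpos.le
      _ = G1 * Ebound := by rw [hG1def, Finset.sum_mul]
  have hcard : (((f n).coeff.support.card : ℕ) : ℝ) ≤ 2*(N:ℝ) + 1 := by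
    have hsub : (f n).coeff.support ⊆ Finset.Icc (-(N:ℤ)) N := by
      intro a ha
      rw [Finset.mem_Icc]
      exact hfN a ha
    have h1 := Finset.card_le_card hsub
    have hIcc : (Finset.Icc (-(N:ℤ)) N).card = 2*N + 1 := by
      rw [Int.card_Icc]
      omega
    rw [hIcc] at h1
    exact_mod_cast h1
  have hsum1 : ∑ j ∈ (f n).coeff.support, |((f n).coeff j:ℝ)|
      ≤ (((f n).coeff.support.card : ℕ) : ℝ) * (G1 * Ebound) := by
    have := Finset.sum_le_card_nsmul (f n).coeff.support (fun j => |((f n).coeff j : ℝ)|) (G1 * Ebound) hkey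
    rwa [nsmul_eq_mul] at this
  have hG1C : G1 ≤ C ^ n := by rw [hG1def]; exact hgsum
  have hEfin : Ebound ≤ (Real.exp (2*(C'+1)) * K0)^n := by
    rw [hEdef, mul_pow]
    have hp1 : Real.exp (2*(C'+1)*(n:ℕ)) = Real.exp (2*(C'+1)) ^ n := by
      rw [← Real.exp_nat_mul]
      congr 1
      ring
    have hp2 : Pi0 ≤ K0 ^ n := by
      rw [hPi0def, Finset.prod_inv_distrib]
      have hprodpos : 0 < ∏ j ∈ Finset.range n, (1 - Real.exp (-(((j:ℝ)+1)/n))) :=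
        Finset.prod_pos hfac
      have hge := prod_one_sub_exp_ge n hn
      have hbasepos : (0:ℝ) < ((1 - Real.exp (-1)) / Real.exp 1) ^ n := by positivity
      calc (∏ j ∈ Finset.range n, (1 - Real.exp (-(((j:ℝ)+1)/n))))⁻¹
          ≤ (((1 - Real.exp (-1)) / Real.exp 1) ^ n)⁻¹ := by
            exact inv_anti₀ hbasepos hge
        _ = K0 ^ n := by
            rw [← inv_pow, hK0]
            congr 1
            rw [inv_div]
    rw [hp1]
    exact mul_le_mul_of_nonneg_left hp2 (by positivity)
  have hcard4 : (((f n).coeff.support.card : ℕ) : ℝ) ≤ (2*C'+3) * 4^n := by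
    have hn2 : (n:ℝ)^2 ≤ 4^n := by
      have h1 : (n:ℕ) < 2^n := Nat.lt_two_pow_self
      have h2 : (n:ℝ) ≤ 2^n := by exact_mod_cast h1.le
      have h3 : (0:ℝ) ≤ (n:ℝ) := by positivity
      calc (n:ℝ)^2 ≤ ((2:ℝ)^n)^2 := by nlinarith
        _ = 4^n := by rw [← pow_mul, mul_comm, pow_mul]; norm_num
    calc (((f n).coeff.support.card : ℕ) : ℝ) ≤ 2*(N:ℝ) + 1 := hcard
      _ ≤ 2*((C'+1) * (n:ℝ)^2) + 1 := by linarith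
      _ ≤ (2*C'+3) * (n:ℝ)^2 := by
          have hexpand : (2*C'+3) * (n:ℝ)^2 - (2*((C'+1)*(n:ℝ)^2)+1) = (n:ℝ)^2 - 1 := by ring
          linarith [hn2ge1, hexpand]
      _ ≤ (2*C'+3) * 4^n := by
          apply mul_le_mul_of_nonneg_left hn2 (by linarith)
  have hEKpos : (0:ℝ) < Real.exp (2*(C'+1)) * K0 := mul_pos (Real.exp_pos _) hK0pos
  calc ∑ j ∈ (f n).coeff.support, |((f n).coeff j:ℝ)|
      ≤ (((f n).coeff.support.card : ℕ) : ℝ) * (G1 * Ebound) := hsum1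
    _ ≤ ((2*C'+3) * 4^n) * (C^n * (Real.exp (2*(C'+1)) * K0)^n) := by
        apply mul_le_mul hcard4
        · exact mul_le_mul hG1C hEfin hEpos.le (pow_nonneg hC.le n)
        · exact mul_nonneg hG1nonneg hEpos.le
        · positivity
    _ ≤ Cout ^ n := by
        rw [hCout]
        have h1 : (2*C'+3) ≤ (2*C'+3)^n := le_self_pow₀ (by linarith) (by omega)
        calc ((2*C'+3) * 4^n) * (C^n * (Real.exp (2*(C'+1)) * K0)^n)
            ≤ ((2*C'+3)^n * 4^n) * (C^n * (Real.exp (2*(C'+1)) * K0)^n) := by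
              apply mul_le_mul_of_nonneg_right _ (by positivity)
              apply mul_le_mul_of_nonneg_right h1 (by positivity)
          _ = ((2*C'+3) * 4 * C * Real.exp (2*(C'+1)) * K0)^n := by
              simp only [mul_pow]
              ring
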